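/- Let M0 be a maximal matching of G and M* a maximum matching. Let W_M be the set of edges of M* having exactly one endpoint in V(M0). Then |W_M| ≥ 2(|M*| − |M0|). -/
import Mathlib


variable {V : Type*} [Fintype V] [DecidableEq V]

/-- A matching of `G`: a finite set of edges of `G` that are pairwise vertex-disjoint. -/
def IsMatching (G : SimpleGraph V) (M : Finset (Sym2 V)) : Prop :=
  (∀ e ∈ M, e ∈ G.edgeSet) ∧
    ∀ e ∈ M, ∀ f ∈ M, e ≠ f → ∀ v : V, v ∈ e → v ∉ f

/-- The set of vertices covered by a set of edges. -/
def mverts (M : Finset (Sym2 V)) : Set V := {v | ∃ e ∈ M, v ∈ e}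

/-- The endpoints of an edge, as a finset. -/
def efin (e : Sym2 V) : Finset V := Finset.univ.filter (fun v => v ∈ e)

lemma mem_efin {e : Sym2 V} {v : V} : v ∈ efin e ↔ v ∈ e := by
  simp [efin]

lemma efin_card_le (e : Sym2 V) : (efin e).card ≤ 2 := by
  induction e using Sym2.ind with
  | _ a b =>
    have : efin (s(a,b) : Sym2 V) ⊆ {a, b} := by
      intro v hv
      rw [mem_efin, Sym2.mem_iff] at hv
      simp [hv]
    calc (efin (s(a,b) : Sym2 V)).card ≤ ({a, b} : Finset V).card :=
          Finset.card_le_card this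
      _ ≤ 2 := Finset.card_insert_le _ _ |>.trans (by simp)

/-- If `M0` is a maximal matching, `M*` a maximum matching, and `W_M` the set of edges of
`M*` with exactly one endpoint in `V(M0)`, then `|W_M| ≥ 2(|M*| − |M0|)`. -/
theorem wings_of_optimum_lower_bound (G : SimpleGraph V) (M0 Mstar WM : Finset (Sym2 V))
    (hM0 : IsMatching G M0)
    (hM0maximal : ∀ e ∈ G.edgeSet, e ∉ M0 → ¬ IsMatching G (insert e M0))
    (hMstar : IsMatching G Mstar)
    (hMstarMax : ∀ N : Finset (Sym2 V), IsMatching G N → N.card ≤ Mstar.card)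
    (hWM : ∀ e, e ∈ WM ↔ e ∈ Mstar ∧
      ∃ u v : V, e = s(u, v) ∧ u ∈ mverts M0 ∧ v ∉ mverts M0) :
    2 * ((Mstar.card : ℤ) - M0.card) ≤ WM.card := by
  classical
  -- T : the finset of vertices covered by M0
  set T : Finset V := Finset.univ.filter (fun v => v ∈ mverts M0) with hT
  have hmemT : ∀ v, v ∈ T ↔ v ∈ mverts M0 := by
    intro v; simp [hT]
  -- A e : endpoints of e lying in V(M0)
  set A : Sym2 V → Finset V := fun e => efin e ∩ T with hA
  -- T has at most 2 * |M0| vertices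
  have hTcard : T.card ≤ 2 * M0.card := by
    have hsub : T ⊆ M0.biUnion (fun e => efin e) := by
      intro v hv
      rw [hmemT] at hv
      obtain ⟨e, he, hve⟩ := hv
      exact Finset.mem_biUnion.2 ⟨e, he, mem_efin.2 hve⟩
    calc T.card ≤ (M0.biUnion (fun e => efin e)).card := Finset.card_le_card hsub
      _ ≤ ∑ e ∈ M0, (efin e).card := Finset.card_biUnion_le
      _ ≤ ∑ e ∈ M0, 2 := Finset.sum_le_sum (fun e _ => efin_card_le e)
      _ = 2 * M0.card := by rw [Finset.sum_const, smul_eq_mul, mul_comm]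
  -- WM ⊆ Mstar
  have hWMsub : WM ⊆ Mstar := fun e he => ((hWM e).1 he).1
  -- the A e, e ∈ Mstar, are pairwise disjoint
  have hdisj : ∀ e ∈ Mstar, ∀ f ∈ Mstar, e ≠ f → Disjoint (A e) (A f) := by
    intro e he f hf hef
    rw [Finset.disjoint_left]
    intro v hv hv'
    have hve : v ∈ e := mem_efin.1 (Finset.mem_inter.1 hv).1
    have hvf : v ∈ f := mem_efin.1 (Finset.mem_inter.1 hv').1
    exact hMstar.2 e he f hf hef v hve hvf
  -- total count
  have hsum : ∑ e ∈ Mstar, (A e).card ≤ T.card := by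
    have : (Mstar.biUnion A).card = ∑ e ∈ Mstar, (A e).card :=
      Finset.card_biUnion hdisj
    rw [← this]
    apply Finset.card_le_card
    intro v hv
    obtain ⟨e, _, hv⟩ := Finset.mem_biUnion.1 hv
    exact (Finset.mem_inter.1 hv).2
  -- edges of Mstar outside WM have both endpoints in V(M0)
  have hboth : ∀ e ∈ Mstar \ WM, 2 ≤ (A e).card := by
    intro e he
    obtain ⟨heM, heW⟩ := Finset.mem_sdiff.1 he
    induction e using Sym2.ind with
    | _ a b =>
      have hab : a ≠ b := by
        have := hMstar.1 _ heM
        rw [SimpleGraph.mem_edgeSet] at this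
        exact this.ne
      have haM : a ∈ mverts M0 := by
        by_contra ha
        by_cases hb : b ∈ mverts M0
        · exact heW ((hWM _).2 ⟨heM, b, a, Sym2.eq_swap, hb, ha⟩)
        · -- neither endpoint covered: contradicts maximality of M0
          have heG := hMstar.1 _ heM
          have heM0 : s(a,b) ∉ M0 := by
            intro h
            exact ha ⟨s(a,b), h, by simp⟩
          apply hM0maximal _ heG heM0
          constructor
          · intro f hf
            rcases Finset.mem_insert.1 hf with rfl | hf
            · exact heG
            · exact hM0.1 f hf
          · intro f hf g hg hfg v hvf hvg
            rcases Finset.mem_insert.1 hf with hfe | hfM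
            · rcases Finset.mem_insert.1 hg with hge | hgM
              · exact hfg (hfe.trans hge.symm)
              · rw [hfe, Sym2.mem_iff] at hvf
                rcases hvf with hva | hvb
                · exact ha ⟨g, hgM, hva ▸ hvg⟩
                · exact hb ⟨g, hgM, hvb ▸ hvg⟩
            · rcases Finset.mem_insert.1 hg with hge | hgM
              · rw [hge, Sym2.mem_iff] at hvg
                rcases hvg with hva | hvb
                · exact ha ⟨f, hfM, hva ▸ hvf⟩
                · exact hb ⟨f, hfM, hvb ▸ hvf⟩
              · exact hM0.2 f hfM g hgM hfg v hvf hvg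
      have hbM : b ∈ mverts M0 := by
        by_contra hb
        exact heW ((hWM _).2 ⟨heM, a, b, rfl, haM, hb⟩)
      have hsub : ({a, b} : Finset V) ⊆ A s(a,b) := by
        intro v hv
        rcases Finset.mem_insert.1 hv with rfl | hv
        · exact Finset.mem_inter.2 ⟨mem_efin.2 (by simp), (hmemT v).2 haM⟩
        · rw [Finset.mem_singleton] at hv; subst hv
          exact Finset.mem_inter.2 ⟨mem_efin.2 (by simp), (hmemT v).2 hbM⟩
      calc 2 = ({a, b} : Finset V).card := by rw [Finset.card_pair hab]
        _ ≤ (A s(a,b)).card := Finset.card_le_card hsub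
  -- edges of WM have at least one endpoint in V(M0)
  have hone : ∀ e ∈ WM, 1 ≤ (A e).card := by
    intro e he
    obtain ⟨_, u, v, rfl, hu, _⟩ := (hWM _).1 he
    have : u ∈ A s(u,v) := Finset.mem_inter.2 ⟨mem_efin.2 (by simp), (hmemT u).2 hu⟩
    exact Finset.card_pos.2 ⟨u, this⟩
  -- combine the counts
  have hsplit : ∑ e ∈ Mstar \ WM, (A e).card + ∑ e ∈ WM, (A e).card
      = ∑ e ∈ Mstar, (A e).card := Finset.sum_sdiff hWMsub
  have h1 : 2 * (Mstar \ WM).card ≤ ∑ e ∈ Mstar \ WM, (A e).card := by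
    calc 2 * (Mstar \ WM).card = ∑ _e ∈ Mstar \ WM, 2 := by
          rw [Finset.sum_const, smul_eq_mul, mul_comm]
      _ ≤ _ := Finset.sum_le_sum hboth
  have h2 : WM.card ≤ ∑ e ∈ WM, (A e).card := by
    calc WM.card = ∑ _e ∈ WM, 1 := by simp
      _ ≤ _ := Finset.sum_le_sum hone
  have hcards : (Mstar \ WM).card = Mstar.card - WM.card :=
    Finset.card_sdiff_of_subset hWMsub
  have hWMle : WM.card ≤ Mstar.card := Finset.card_le_card hWMsub
  have key : 2 * (Mstar.card - WM.card) + WM.card ≤ 2 * M0.card := by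
    rw [← hcards]
    omega
  omega
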